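/- arXiv:1510.00094 — 2 statements merged into one kernel-verified Lean document; each statement's English description precedes it below -/
import Mathlib

section
/- The SCAD penalty with λ > 0, a > 2 can be written as a difference of two convex functions: p_λ(|β|) = λ|β| − q(β), where q(β) = λ|β| − p_λ(|β|) is convex on ℝ. -/
set_option maxHeartbeats 1600000

lemma hasDerivAt_mul_abs (x : ℝ) : HasDerivAt (fun y : ℝ => y * |y|) (2 * |x|) x := by
  rcases eq_or_ne x 0 with rfl | hx
  · simp only [abs_zero, mul_zero]
    rw [hasDerivAt_iff_tendsto_slope]
    have h : Filter.Tendsto (fun y : ℝ => |y|) (nhdsWithin 0 {(0:ℝ)}ᶜ) (nhds 0) :=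
      (continuous_abs.tendsto' 0 0 abs_zero).mono_left nhdsWithin_le_nhds
    refine h.congr' ?_
    filter_upwards [self_mem_nhdsWithin] with y hy
    have hy0 : y ≠ 0 := hy
    rw [slope_def_field]; simp only [abs_zero, mul_zero, sub_zero]; rw [mul_div_cancel_left₀ _ hy0]
  · have h := ((hasDerivAt_id x).mul (hasDerivAt_abs hx))
    refine HasDerivAt.congr_deriv h ?_
    rcases lt_or_gt_of_ne hx with h0 | h0
    · simp [abs_of_neg h0, h0]; ring
    · simp [abs_of_pos h0, h0]; ring

lemma hasDerivAt_T (y : ℝ) :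
    HasDerivAt (fun z : ℝ => z ^ 2 + z * |z|) (2 * y + 2 * |y|) y := by
  have := (hasDerivAt_pow 2 y).add (hasDerivAt_mul_abs y)
  simp at this; exact this

theorem scad_dc_decomposition (lam a : ℝ) (hlam : 0 < lam) (ha : 2 < a)
    (p : ℝ → ℝ)
    (hp : ∀ β : ℝ, 0 ≤ β →
      p β = if β < lam then lam * β
            else if β ≤ a * lam then (a * lam * β - (β^2 + lam^2) / 2) / (a - 1)
            else (a + 1) * lam^2 / 2)
    (q : ℝ → ℝ) (hq : ∀ β : ℝ, q β = lam * |β| - p |β|) :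
    (∀ β : ℝ, p |β| = lam * |β| - q β) ∧ ConvexOn ℝ Set.univ q := by
  have ha1 : (0:ℝ) < a - 1 := by linarith
  have ha1' : a - 1 ≠ 0 := ne_of_gt ha1
  have hal : lam < a * lam := by nlinarith
  constructor
  · intro β; have := hq β; linarith
  -- explicit smooth representation
  set T : ℝ → ℝ := fun z => z ^ 2 + z * |z| with hT
  set Q : ℝ → ℝ := fun β =>
      (T (β - lam) + T (-β - lam) - T (β - a * lam) - T (-β - a * lam)) / (4 * (a - 1)) with hQ
  have hQeven : ∀ β : ℝ, Q (-β) = Q β := by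
    intro β
    simp only [hQ, hT, neg_neg]
    ring_nf
  have key : ∀ β : ℝ, 0 ≤ β → q β = Q β := by
    intro β hβ
    have habs : |β| = β := abs_of_nonneg hβ
    have h2 : -β - lam < 0 := by linarith
    have h4 : -β - a * lam < 0 := by linarith
    rw [hq β, habs, hp β hβ]
    rcases lt_or_ge β lam with hc1 | hc1
    · have h1 : β - lam < 0 := by linarith
      have h3 : β - a * lam < 0 := by linarith
      rw [if_pos hc1]
      simp only [hQ, hT, abs_of_neg h1, abs_of_neg h2, abs_of_neg h3, abs_of_neg h4]
      field_simp
      ring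
    · have h1 : (0:ℝ) ≤ β - lam := by linarith
      rw [if_neg (not_lt.mpr hc1)]
      rcases le_or_gt β (a * lam) with hc2 | hc2
      · have h3 : β - a * lam ≤ 0 := by linarith
        rw [if_pos hc2]
        simp only [hQ, hT, abs_of_nonneg h1, abs_of_nonpos h3, abs_of_neg h2, abs_of_neg h4]
        field_simp
        ring
      · have h3 : (0:ℝ) < β - a * lam := by linarith
        rw [if_neg (not_le.mpr hc2)]
        simp only [hQ, hT, abs_of_nonneg h1, abs_of_pos h3, abs_of_neg h2, abs_of_neg h4]
        field_simp
        ring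
  have keyall : ∀ β : ℝ, q β = Q β := by
    intro β
    rcases le_total 0 β with h | h
    · exact key β h
    · have h1 : q β = q (-β) := by
        rw [hq β, hq (-β), abs_neg]
      rw [h1, key (-β) (by linarith), hQeven]
  -- the derivative
  set D : ℝ → ℝ := fun x =>
      (min (max (x - lam) 0) ((a - 1) * lam) + max (min (x + lam) 0) (-((a - 1) * lam))) / (a - 1)
      with hD
  have hDalt : ∀ x : ℝ,
      D x = ((x - lam + |x - lam|) - (-x - lam + |-x - lam|) - (x - a * lam + |x - a * lam|)
        + (-x - a * lam + |-x - a * lam|)) / (2 * (a - 1)) := by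
    intro x
    simp only [hD]
    rcases le_total x (-(a * lam)) with r1 | r1
    · rw [abs_of_nonpos (by nlinarith : x - lam ≤ 0), abs_of_nonneg (by nlinarith : 0 ≤ -x - lam),
        abs_of_nonpos (by nlinarith : x - a * lam ≤ 0),
        abs_of_nonneg (by nlinarith : 0 ≤ -x - a * lam),
        max_eq_right (by nlinarith : x - lam ≤ 0), min_eq_left (by nlinarith : (0:ℝ) ≤ (a-1) * lam),
        min_eq_left (by nlinarith : x + lam ≤ 0),
        max_eq_right (by nlinarith : x + lam ≤ -((a-1) * lam))]
      field_simp; ring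
    rcases le_total x (-lam) with r2 | r2
    · rw [abs_of_nonpos (by nlinarith : x - lam ≤ 0), abs_of_nonneg (by nlinarith : 0 ≤ -x - lam),
        abs_of_nonpos (by nlinarith : x - a * lam ≤ 0),
        abs_of_nonpos (by nlinarith : -x - a * lam ≤ 0),
        max_eq_right (by nlinarith : x - lam ≤ 0), min_eq_left (by nlinarith : (0:ℝ) ≤ (a-1) * lam),
        min_eq_left (by nlinarith : x + lam ≤ 0),
        max_eq_left (by nlinarith : -((a-1) * lam) ≤ x + lam)]
      field_simp; ring
    rcases le_total x lam with r3 | r3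
    · rw [abs_of_nonpos (by nlinarith : x - lam ≤ 0), abs_of_nonpos (by nlinarith : -x - lam ≤ 0),
        abs_of_nonpos (by nlinarith : x - a * lam ≤ 0),
        abs_of_nonpos (by nlinarith : -x - a * lam ≤ 0),
        max_eq_right (by nlinarith : x - lam ≤ 0), min_eq_left (by nlinarith : (0:ℝ) ≤ (a-1) * lam),
        min_eq_right (by nlinarith : (0:ℝ) ≤ x + lam),
        max_eq_left (by nlinarith : -((a-1) * lam) ≤ (0:ℝ))]
      field_simp; ring
    rcases le_total x (a * lam) with r4 | r4
    · rw [abs_of_nonneg (by nlinarith : (0:ℝ) ≤ x - lam),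
        abs_of_nonpos (by nlinarith : -x - lam ≤ 0),
        abs_of_nonpos (by nlinarith : x - a * lam ≤ 0),
        abs_of_nonpos (by nlinarith : -x - a * lam ≤ 0),
        max_eq_left (by nlinarith : (0:ℝ) ≤ x - lam),
        min_eq_left (by nlinarith : x - lam ≤ (a-1) * lam),
        min_eq_right (by nlinarith : (0:ℝ) ≤ x + lam),
        max_eq_left (by nlinarith : -((a-1) * lam) ≤ (0:ℝ))]
      field_simp; ring
    · rw [abs_of_nonneg (by nlinarith : (0:ℝ) ≤ x - lam),
        abs_of_nonpos (by nlinarith : -x - lam ≤ 0),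
        abs_of_nonneg (by nlinarith : (0:ℝ) ≤ x - a * lam),
        abs_of_nonpos (by nlinarith : -x - a * lam ≤ 0),
        max_eq_left (by nlinarith : (0:ℝ) ≤ x - lam),
        min_eq_right (by nlinarith : (a-1) * lam ≤ x - lam),
        min_eq_right (by nlinarith : (0:ℝ) ≤ x + lam),
        max_eq_left (by nlinarith : -((a-1) * lam) ≤ (0:ℝ))]
      field_simp; ring
  have hQderiv : ∀ x : ℝ, HasDerivAt Q (D x) x := by
    intro x
    have i1 : HasDerivAt (fun β : ℝ => β - lam) 1 x := (hasDerivAt_id x).sub_const lam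
    have i2 : HasDerivAt (fun β : ℝ => -β - lam) (-1) x := (hasDerivAt_neg x).sub_const lam
    have i3 : HasDerivAt (fun β : ℝ => β - a * lam) 1 x := (hasDerivAt_id x).sub_const (a * lam)
    have i4 : HasDerivAt (fun β : ℝ => -β - a * lam) (-1) x :=
      (hasDerivAt_neg x).sub_const (a * lam)
    have h1 := (hasDerivAt_T (x - lam)).comp x i1
    have h2 := (hasDerivAt_T (-x - lam)).comp x i2
    have h3 := (hasDerivAt_T (x - a * lam)).comp x i3
    have h4 := (hasDerivAt_T (-x - a * lam)).comp x i4
    have h := (((h1.add h2).sub h3).sub h4).div_const (4 * (a - 1))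
    refine HasDerivAt.congr_deriv h ?_
    rw [hDalt x]
    field_simp
    ring
  have hmono : Monotone D := by
    have m1 : Monotone (fun x : ℝ => min (max (x - lam) 0) ((a - 1) * lam)) := by
      intro u v huv
      exact min_le_min (max_le_max (by linarith) le_rfl) le_rfl
    have m2 : Monotone (fun x : ℝ => max (min (x + lam) 0) (-((a - 1) * lam))) := by
      intro u v huv
      exact max_le_max (min_le_min (by linarith) le_rfl) le_rfl
    intro x y hxy
    simp only [hD]
    exact div_le_div_of_nonneg_right (add_le_add (m1 hxy) (m2 hxy)) ha1.le
  have hfun : q = Q := funext keyall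
  rw [hfun]
  refine Monotone.convexOn_univ_of_deriv (fun x => (hQderiv x).differentiableAt) ?_
  have : deriv Q = D := funext fun x => (hQderiv x).deriv
  rw [this]
  exact hmono
end

section
/- For the IPW variance decomposition: with Σ₂ = E[(1/π(T))·δψ(δψ)ᵀ], Σ₄ = E[((1−π(T))/π(T))·m(T)m(T)ᵀ] where m(T) = E[δψ|T], the matrix Σ₂ − Σ₄ equals E[δψ(δψ)ᵀ] + E[((1−π(T))/π(T))·(δψ − m(T))(δψ − m(T))ᵀ], and in particular Σ₂ − Σ₄ is positive semidefinite. -/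
open MeasureTheory ProbabilityTheory Matrix

theorem ipw_variance_decomposition {Ω α : Type*}
    [mΩ : MeasurableSpace Ω] [MeasurableSpace α]
    (μ : Measure Ω) [IsProbabilityMeasure μ] (q : ℕ)
    (T : Ω → α) (hT : Measurable T)
    (π : α → ℝ) (hπ : Measurable π)
    (αl αu : ℝ) (hαl : 0 < αl) (hαu : αu < 1)
    (hπbd : ∀ x, αl ≤ π x ∧ π x ≤ αu)
    (d : Ω → Fin q → ℝ) (hdmeas : Measurable d)
    (hd : ∀ i, MemLp (fun ω => d ω i) 2 μ)
    (m : α → Fin q → ℝ) (hmmeas : Measurable m)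
    (hmL2 : ∀ i, MemLp (fun ω => m (T ω) i) 2 μ)
    (hmdef : ∀ i, μ[fun ω => d ω i | MeasurableSpace.comap T inferInstance]
        =ᵐ[μ] fun ω => m (T ω) i) :
    ((Matrix.of fun i j => ∫ ω, (1 / π (T ω)) * (d ω i * d ω j) ∂μ :
        Matrix (Fin q) (Fin q) ℝ) -
      (Matrix.of fun i j =>
        ∫ ω, ((1 - π (T ω)) / π (T ω)) * (m (T ω) i * m (T ω) j) ∂μ) =
      (Matrix.of fun i j => ∫ ω, d ω i * d ω j ∂μ) +
        (Matrix.of fun i j =>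
          ∫ ω, ((1 - π (T ω)) / π (T ω)) *
            ((d ω i - m (T ω) i) * (d ω j - m (T ω) j)) ∂μ)) ∧
      ((Matrix.of fun i j => ∫ ω, (1 / π (T ω)) * (d ω i * d ω j) ∂μ :
          Matrix (Fin q) (Fin q) ℝ) -
        (Matrix.of fun i j =>
          ∫ ω, ((1 - π (T ω)) / π (T ω)) * (m (T ω) i * m (T ω) j) ∂μ)).PosSemidef := by
  have hπT : Measurable fun ω => π (T ω) := hπ.comp hT
  set g : Ω → ℝ := fun ω => (1 - π (T ω)) / π (T ω) with hgdef
  have hπpos : ∀ ω, 0 < π (T ω) := fun ω => lt_of_lt_of_le hαl (hπbd (T ω)).1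
  have hπne : ∀ ω, π (T ω) ≠ 0 := fun ω => (hπpos ω).ne'
  have hgmeas : Measurable g := (measurable_const.sub hπT).div hπT
  have hgnn : ∀ ω, 0 ≤ g ω := fun ω =>
    div_nonneg (by linarith [(hπbd (T ω)).2]) (hπpos ω).le
  have hgbd : ∀ ω, ‖g ω‖ ≤ (1 - αl) / αl := by
    intro ω
    rw [Real.norm_eq_abs, abs_of_nonneg (hgnn ω)]
    have h1 := (hπbd (T ω)).1
    have h2 := (hπbd (T ω)).2
    exact div_le_div₀ (by linarith) (by linarith) hαl h1
  -- integrability of products of L² functions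
  have hintmul : ∀ (f1 f2 : Ω → ℝ), MemLp f1 2 μ → MemLp f2 2 μ →
      Integrable (fun ω => f1 ω * f2 ω) μ := by
    intro f1 f2 h1 h2
    have := L2.integrable_inner (𝕜 := ℝ) (h1.toLp f1) (h2.toLp f2)
    refine this.congr ?_
    filter_upwards [h1.coeFn_toLp, h2.coeFn_toLp] with ω e1 e2
    simp [e1, e2, RCLike.inner_apply, mul_comm]
  have hintgmul : ∀ (f1 f2 : Ω → ℝ), MemLp f1 2 μ → MemLp f2 2 μ →
      Integrable (fun ω => g ω * (f1 ω * f2 ω)) μ := fun f1 f2 h1 h2 =>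
    (hintmul f1 f2 h1 h2).bdd_mul hgmeas.aestronglyMeasurable (ae_of_all _ hgbd)
  -- measurability w.r.t. comap T
  have hTm : Measurable[MeasurableSpace.comap T inferInstance] T :=
    measurable_iff_comap_le.mpr le_rfl
  have hmT : ∀ j, Measurable[MeasurableSpace.comap T inferInstance]
      (fun ω => m (T ω) j) := fun j => ((measurable_pi_apply j).comp hmmeas).comp hTm
  have hgT : Measurable[MeasurableSpace.comap T inferInstance] g :=
    (measurable_const.sub (hπ.comp hTm)).div (hπ.comp hTm)
  -- the key tower-property identity
  have key : ∀ i j, ∫ ω, g ω * m (T ω) j * d ω i ∂μ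
      = ∫ ω, g ω * m (T ω) j * m (T ω) i ∂μ := by
    intro i j
    have hhsm : StronglyMeasurable[MeasurableSpace.comap T inferInstance]
        (fun ω => g ω * m (T ω) j) := (hgT.mul (hmT j)).stronglyMeasurable
    have hint1 : Integrable ((fun ω => g ω * m (T ω) j) * fun ω => d ω i) μ := by
      refine (hintgmul (fun ω => m (T ω) j) (fun ω => d ω i) (hmL2 j) (hd i)).congr ?_
      exact Filter.Eventually.of_forall fun ω => by
        simp only [Pi.mul_apply]; ring
    have hint2 : Integrable (fun ω => d ω i) μ :=
      (hd i).integrable (by norm_num)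
    have hce := condExp_mul_of_stronglyMeasurable_left (m := MeasurableSpace.comap T inferInstance)
      hhsm hint1 hint2
    have h0 : ∫ ω, g ω * m (T ω) j * d ω i ∂μ
        = ∫ ω, ((fun ω => g ω * m (T ω) j) * fun ω => d ω i) ω ∂μ := rfl
    rw [h0, ← integral_condExp hT.comap_le]
    refine integral_congr_ae ?_
    filter_upwards [hce, hmdef i] with ω h1 h2
    rw [h1]
    simp only [Pi.mul_apply, h2]
  -- integrable pieces
  have hddInt : ∀ i j, Integrable (fun ω => d ω i * d ω j) μ :=
    fun i j => hintmul _ _ (hd i) (hd j)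
  have hgddInt : ∀ i j, Integrable (fun ω => g ω * (d ω i * d ω j)) μ :=
    fun i j => hintgmul _ _ (hd i) (hd j)
  have hgmdInt : ∀ i j, Integrable (fun ω => g ω * m (T ω) j * d ω i) μ := by
    intro i j
    refine (hintgmul (fun ω => m (T ω) j) (fun ω => d ω i) (hmL2 j) (hd i)).congr ?_
    exact Filter.Eventually.of_forall fun ω => by ring
  have hgmmInt : ∀ i j, Integrable (fun ω => g ω * (m (T ω) i * m (T ω) j)) μ :=
    fun i j => hintgmul _ _ (hmL2 i) (hmL2 j)
  -- entrywise identity e1 : Σ₂ entry = ∫ dd + ∫ g dd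
  have e1 : ∀ i j, ∫ ω, (1 / π (T ω)) * (d ω i * d ω j) ∂μ
      = (∫ ω, d ω i * d ω j ∂μ) + ∫ ω, g ω * (d ω i * d ω j) ∂μ := by
    intro i j
    rw [← integral_add (hddInt i j) (hgddInt i j)]
    refine integral_congr_ae (Filter.Eventually.of_forall fun ω => ?_)
    have hg1 : g ω = 1 / π (T ω) - 1 := by
      show (1 - π (T ω)) / π (T ω) = 1 / π (T ω) - 1
      rw [sub_div, div_self (hπne ω)]
    show (1 : ℝ) / π (T ω) * (d ω i * d ω j) = d ω i * d ω j + g ω * (d ω i * d ω j)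
    rw [hg1]
    ring
  -- entrywise identity e2 : ∫ g (d-m)(d-m) = ∫ g dd - ∫ g m_j d_i - ∫ g m_i d_j + ∫ g m m
  have e2 : ∀ i j, ∫ ω, g ω * ((d ω i - m (T ω) i) * (d ω j - m (T ω) j)) ∂μ
      = (∫ ω, g ω * (d ω i * d ω j) ∂μ) - (∫ ω, g ω * m (T ω) j * d ω i ∂μ)
        - (∫ ω, g ω * m (T ω) i * d ω j ∂μ) + ∫ ω, g ω * (m (T ω) i * m (T ω) j) ∂μ := by
    intro i j
    have hpt : (fun ω => g ω * ((d ω i - m (T ω) i) * (d ω j - m (T ω) j)))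
        = fun ω => g ω * (d ω i * d ω j) - g ω * m (T ω) j * d ω i
          - g ω * m (T ω) i * d ω j + g ω * (m (T ω) i * m (T ω) j) :=
      funext fun ω => by ring
    have hs1 : Integrable (fun ω => g ω * (d ω i * d ω j)
        - g ω * m (T ω) j * d ω i) μ := (hgddInt i j).sub (hgmdInt i j)
    have hs2 : Integrable (fun ω => g ω * (d ω i * d ω j)
        - g ω * m (T ω) j * d ω i - g ω * m (T ω) i * d ω j) μ := hs1.sub (hgmdInt j i)
    rw [hpt, integral_add hs2 (hgmmInt i j), integral_sub hs1 (hgmdInt j i),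
      integral_sub (hgddInt i j) (hgmdInt i j)]
  -- tower consequences:
  have e3 : ∀ i j, ∫ ω, g ω * m (T ω) j * d ω i ∂μ
      = ∫ ω, g ω * (m (T ω) i * m (T ω) j) ∂μ := by
    intro i j
    rw [key i j]
    refine integral_congr_ae (Filter.Eventually.of_forall fun ω => by ring)
  have e3' : ∀ i j, ∫ ω, g ω * m (T ω) i * d ω j ∂μ
      = ∫ ω, g ω * (m (T ω) i * m (T ω) j) ∂μ := by
    intro i j
    rw [key j i]
    refine integral_congr_ae (Filter.Eventually.of_forall fun ω => by ring)
  have hmain :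
      (Matrix.of fun i j => ∫ ω, (1 / π (T ω)) * (d ω i * d ω j) ∂μ :
        Matrix (Fin q) (Fin q) ℝ) -
      (Matrix.of fun i j =>
        ∫ ω, ((1 - π (T ω)) / π (T ω)) * (m (T ω) i * m (T ω) j) ∂μ) =
      (Matrix.of fun i j => ∫ ω, d ω i * d ω j ∂μ) +
        (Matrix.of fun i j =>
          ∫ ω, ((1 - π (T ω)) / π (T ω)) *
            ((d ω i - m (T ω) i) * (d ω j - m (T ω) j)) ∂μ) := by
    ext i j
    simp only [Matrix.sub_apply, Matrix.add_apply, Matrix.of_apply]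
    have h1 := e1 i j
    have h2 := e2 i j
    have h3 := e3 i j
    have h3' := e3' i j
    simp only [← hgdef] at *
    rw [h1, h2, h3, h3']
    ring
  refine ⟨hmain, ?_⟩
  rw [hmain]
  have psd1 : (Matrix.of fun i j => ∫ ω, d ω i * d ω j ∂μ :
      Matrix (Fin q) (Fin q) ℝ).PosSemidef := by
    refine Matrix.PosSemidef.of_dotProduct_mulVec_nonneg ?_ ?_
    · ext i j
      simp only [Matrix.conjTranspose_apply, Matrix.of_apply, star_trivial]
      exact integral_congr_ae (Filter.Eventually.of_forall fun ω => mul_comm _ _)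
    · intro x
      have hterm : ∀ i j, Integrable (fun ω => x i * (d ω i * d ω j * x j)) μ :=
        fun i j => (((hddInt i j).mul_const (x j)).const_mul (x i))
      have hcalc : (star x ⬝ᵥ (Matrix.of fun i j => ∫ ω, d ω i * d ω j ∂μ).mulVec x)
          = ∫ ω, (∑ i, x i * d ω i) ^ 2 ∂μ := by
        have : (star x ⬝ᵥ (Matrix.of fun i j => ∫ ω, d ω i * d ω j ∂μ).mulVec x)
            = ∑ i, ∑ j, ∫ ω, x i * (d ω i * d ω j * x j) ∂μ := by
          simp only [dotProduct, Matrix.mulVec, Matrix.of_apply, star_trivial,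
            Finset.mul_sum]
          refine Finset.sum_congr rfl fun i _ => Finset.sum_congr rfl fun j _ => ?_
          rw [integral_const_mul, integral_mul_const]
        rw [this]
        have step1 : ∀ i : Fin q, ∑ j, ∫ ω, x i * (d ω i * d ω j * x j) ∂μ
            = ∫ ω, ∑ j, x i * (d ω i * d ω j * x j) ∂μ :=
          fun i => (integral_finset_sum _ (fun j _ => hterm i j)).symm
        rw [Finset.sum_congr rfl fun i _ => step1 i,
          ← integral_finset_sum _ (fun i _ => integrable_finset_sum _ (fun j _ => hterm i j))]
        refine integral_congr_ae (Filter.Eventually.of_forall fun ω => ?_)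
        show ∑ i, ∑ j, x i * (d ω i * d ω j * x j) = (∑ i, x i * d ω i) ^ 2
        rw [sq, Finset.sum_mul_sum]
        exact Finset.sum_congr rfl fun i _ => Finset.sum_congr rfl fun j _ => by ring
      rw [hcalc]
      exact integral_nonneg fun ω => sq_nonneg _
  have psd2 : (Matrix.of fun i j =>
      ∫ ω, ((1 - π (T ω)) / π (T ω)) *
        ((d ω i - m (T ω) i) * (d ω j - m (T ω) j)) ∂μ :
      Matrix (Fin q) (Fin q) ℝ).PosSemidef := by
    have hdm : ∀ i, MemLp (fun ω => d ω i - m (T ω) i) 2 μ := fun i => (hd i).sub (hmL2 i)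
    have hInt : ∀ i j, Integrable
        (fun ω => g ω * ((d ω i - m (T ω) i) * (d ω j - m (T ω) j))) μ :=
      fun i j => hintgmul _ _ (hdm i) (hdm j)
    refine Matrix.PosSemidef.of_dotProduct_mulVec_nonneg ?_ ?_
    · ext i j
      simp only [Matrix.conjTranspose_apply, Matrix.of_apply, star_trivial]
      exact integral_congr_ae (Filter.Eventually.of_forall fun ω => by ring)
    · intro x
      have hterm : ∀ i j, Integrable
          (fun ω => x i * (g ω * ((d ω i - m (T ω) i) * (d ω j - m (T ω) j)) * x j)) μ :=
        fun i j => (((hInt i j).mul_const (x j)).const_mul (x i))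
      have hcalc : (star x ⬝ᵥ (Matrix.of fun i j =>
          ∫ ω, ((1 - π (T ω)) / π (T ω)) *
            ((d ω i - m (T ω) i) * (d ω j - m (T ω) j)) ∂μ).mulVec x)
          = ∫ ω, g ω * (∑ i, x i * (d ω i - m (T ω) i)) ^ 2 ∂μ := by
        have h0 : (star x ⬝ᵥ (Matrix.of fun i j =>
            ∫ ω, ((1 - π (T ω)) / π (T ω)) *
              ((d ω i - m (T ω) i) * (d ω j - m (T ω) j)) ∂μ).mulVec x)
            = ∑ i, ∑ j, ∫ ω, x i * (g ω * ((d ω i - m (T ω) i) * (d ω j - m (T ω) j)) * x j) ∂μ := by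
          simp only [dotProduct, Matrix.mulVec, Matrix.of_apply, star_trivial,
            Finset.mul_sum, ← hgdef]
          refine Finset.sum_congr rfl fun i _ => Finset.sum_congr rfl fun j _ => ?_
          rw [integral_const_mul, integral_mul_const]
        rw [h0]
        have step1 : ∀ i : Fin q, ∑ j, ∫ ω, x i * (g ω * ((d ω i - m (T ω) i) * (d ω j - m (T ω) j)) * x j) ∂μ
            = ∫ ω, ∑ j, x i * (g ω * ((d ω i - m (T ω) i) * (d ω j - m (T ω) j)) * x j) ∂μ :=
          fun i => (integral_finset_sum _ (fun j _ => hterm i j)).symm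
        rw [Finset.sum_congr rfl fun i _ => step1 i,
          ← integral_finset_sum _ (fun i _ => integrable_finset_sum _ (fun j _ => hterm i j))]
        refine integral_congr_ae (Filter.Eventually.of_forall fun ω => ?_)
        show ∑ i, ∑ j, x i * (g ω * ((d ω i - m (T ω) i) * (d ω j - m (T ω) j)) * x j)
          = g ω * (∑ i, x i * (d ω i - m (T ω) i)) ^ 2
        rw [sq, Finset.sum_mul_sum, Finset.mul_sum]
        refine Finset.sum_congr rfl fun i _ => ?_
        rw [Finset.mul_sum]
        exact Finset.sum_congr rfl fun j _ => by ring
      rw [hcalc]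
      exact integral_nonneg fun ω => mul_nonneg (hgnn ω) (sq_nonneg _)
  exact psd1.add psd2
end
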